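/- Let G be a finite simple graph and let T be a spanning forest of G, i.e., a subgraph of G with the same vertex set whose underlying graph is acyclic and such that any two vertices are connected in T if and only if they are connected in G. Then the ZMod 2-linear map ker ∂_G → ((E(G) \ E(T)) → ZMod 2) that restricts a cycle vector to the edges of G not in T is a linear isomorphism. In particular, for each non-forest edge e there is a unique cycle vector equal to 1 at e and 0 at every other non-forest edge, and these fundamental cycles form a basis of the cycle space of G. -/

import Mathlib

open Classical in
/-- The boundary map `∂_G` of a finite simple graph `G`: the `ZMod 2`-linear map
`(E(G) → ZMod 2) → (V → ZMod 2)` sending the indicator function of an edge with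
endpoints `u`, `v` to `χ_u + χ_v`.  (Equivalently, `∂_G γ v` is the sum of `γ e`
over all edges `e` of `G` containing the vertex `v`.)  The cycle space of `G`
is `ker ∂_G`. -/
noncomputable def gbdry {V : Type*} [Fintype V] (G : SimpleGraph V) :
    (G.edgeSet → ZMod 2) →ₗ[ZMod 2] (V → ZMod 2) where
  toFun γ v := ∑ e : G.edgeSet, if v ∈ (e : Sym2 V) then γ e else 0
  map_add' γ δ := by
    funext v
    try dsimp only
    simp only [Pi.add_apply]
    rw [← Finset.sum_add_distrib]
    refine Finset.sum_congr rfl fun e _ => ?_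
    by_cases h : v ∈ (e : Sym2 V) <;> simp [h]
  map_smul' c γ := by
    funext v
    try dsimp only
    simp only [Pi.smul_apply, smul_eq_mul, RingHom.id_apply]
    rw [Finset.mul_sum]
    refine Finset.sum_congr rfl fun e _ => ?_
    by_cases h : v ∈ (e : Sym2 V) <;> simp [h]

open Classical in
/-- The `ZMod 2`-linear map restricting a cycle vector of `G` to the edges of `G`
not in the subgraph `T`. -/
noncomputable def restrictCycles {V : Type*} [Fintype V] (G : SimpleGraph V)
    (T : G.Subgraph) :
    LinearMap.ker (gbdry G) →ₗ[ZMod 2] ((↥(G.edgeSet \ T.edgeSet)) → ZMod 2) where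
  toFun γ e := (γ : G.edgeSet → ZMod 2) ⟨(e : Sym2 V), e.2.1⟩
  map_add' _ _ := rfl
  map_smul' _ _ := rfl

open Classical

lemma gbdry_apply {V : Type*} [Fintype V] (G : SimpleGraph V) (γ : G.edgeSet → ZMod 2) (v : V) :
    gbdry G γ v = ∑ e : G.edgeSet, if v ∈ (e : Sym2 V) then γ e else 0 := rfl

lemma gbdry_single {V : Type*} [Fintype V] (G : SimpleGraph V) {u v : V} (h : G.Adj u v) :
    gbdry G (fun f => if (f : Sym2 V) = s(u,v) then 1 else 0) =
      fun w => (if w = u then 1 else 0) + (if w = v then 1 else 0) := by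
  funext w
  rw [gbdry_apply]
  have key : ∀ e : G.edgeSet,
      (if w ∈ (e : Sym2 V) then (if (e : Sym2 V) = s(u,v) then (1 : ZMod 2) else 0) else 0)
      = if e = (⟨s(u,v), (SimpleGraph.mem_edgeSet G).mpr h⟩ : G.edgeSet)
          then (if w ∈ s(u,v) then 1 else 0) else 0 := by
    intro e
    by_cases he : e = (⟨s(u,v), (SimpleGraph.mem_edgeSet G).mpr h⟩ : G.edgeSet)
    · subst he; simp
    · have h2 : ¬ ((e : Sym2 V) = s(u,v)) := fun hh => he (Subtype.ext hh)
      simp [he, h2]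
  rw [Finset.sum_congr rfl (fun e _ => key e), Finset.sum_ite_eq' Finset.univ]
  simp only [Finset.mem_univ, if_true, Sym2.mem_iff]
  by_cases hu : w = u <;> by_cases hv : w = v
  · exact absurd (hu.symm.trans hv) h.ne
  · simp [hu, hv, h.ne]
  · simp [hu, hv, h.ne']
  · simp [hu, hv]

lemma gbdry_walk {V : Type*} [Fintype V] (G : SimpleGraph V) {u v : V} (p : G.Walk u v) :
    gbdry G (fun f => ((p.edges.count (f : Sym2 V) : ℕ) : ZMod 2)) =
      fun w => (if w = u then 1 else 0) + (if w = v then 1 else 0) := by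
  have two : (2 : ZMod 2) = 0 := by decide
  induction p with
  | nil =>
    rename_i a
    have h0 : (fun f : G.edgeSet =>
        (((SimpleGraph.Walk.nil : G.Walk a a).edges.count (f : Sym2 V) : ℕ) : ZMod 2)) =
        (0 : G.edgeSet → ZMod 2) := by
      funext f; simp
    rw [h0, map_zero]
    funext w
    by_cases hw : w = a <;> simp [hw, Pi.zero_apply] <;> decide
  | cons h q ih =>
    rename_i a b c
    have hsplit : (fun f : G.edgeSet =>
        (((SimpleGraph.Walk.cons h q).edges.count (f : Sym2 V) : ℕ) : ZMod 2)) =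
        (fun f : G.edgeSet => if (f : Sym2 V) = s(a,b) then (1 : ZMod 2) else 0)
        + (fun f : G.edgeSet => ((q.edges.count (f : Sym2 V) : ℕ) : ZMod 2)) := by
      funext f
      simp only [SimpleGraph.Walk.edges_cons, List.count_cons, Pi.add_apply, beq_iff_eq]
      push_cast
      by_cases hf : (f : Sym2 V) = s(a,b)
      · rw [if_pos hf, if_pos hf.symm]; ring
      · rw [if_neg hf, if_neg (fun hh => hf hh.symm)]; ring
    rw [hsplit, map_add, gbdry_single G h, ih]
    funext w
    simp only [Pi.add_apply]
    by_cases h1 : w = a <;> by_cases h2 : w = b <;> by_cases h3 : w = c <;>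
      simp [h1, h2, h3, two] <;> ring_nf <;> simp [two]

noncomputable def crossZ {V : Type*} [Fintype V] (S : Set V) (s : Sym2 V) : ZMod 2 :=
  ∑ v : V, if v ∈ S ∧ v ∈ s then 1 else 0

lemma cross_sum {V : Type*} [Fintype V] (S : Set V) {c d : V} (hcd : c ≠ d) :
    crossZ S s(c,d) = (if c ∈ S then 1 else 0) + (if d ∈ S then 1 else 0) := by
  rw [crossZ]
  have key : ∀ v : V, (if v ∈ S ∧ v ∈ s(c,d) then (1:ZMod 2) else 0)
      = (if v = c then (if c ∈ S then (1:ZMod 2) else 0) else 0)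
      + (if v = d then (if d ∈ S then (1:ZMod 2) else 0) else 0) := by
    intro v
    by_cases h1 : v = c
    · subst h1; simp [Sym2.mem_iff, hcd]
    · by_cases h2 : v = d
      · subst h2; simp [Sym2.mem_iff, h1]
      · simp [Sym2.mem_iff, h1, h2]
  rw [Finset.sum_congr rfl (fun v _ => key v), Finset.sum_add_distrib,
    Finset.sum_ite_eq' Finset.univ, Finset.sum_ite_eq' Finset.univ]
  simp

lemma cut_eq {V : Type*} [Fintype V] (G : SimpleGraph V) (γ : G.edgeSet → ZMod 2) (S : Set V) :
    (∑ v : V, if v ∈ S then gbdry G γ v else 0)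
      = ∑ e : G.edgeSet, γ e * crossZ S (e : Sym2 V) := by
  have step1 : ∀ v : V, (if v ∈ S then gbdry G γ v else 0)
      = ∑ e : G.edgeSet, (if v ∈ S ∧ v ∈ (e : Sym2 V) then γ e else 0) := by
    intro v
    rw [gbdry_apply]
    by_cases hv : v ∈ S
    · simp only [hv, if_true, true_and]
    · simp [hv]
  rw [Finset.sum_congr rfl (fun v _ => step1 v), Finset.sum_comm]
  refine Finset.sum_congr rfl fun e _ => ?_
  rw [crossZ, Finset.mul_sum]
  refine Finset.sum_congr rfl fun v _ => ?_
  by_cases h : v ∈ S ∧ v ∈ (e : Sym2 V) <;> simp [h]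

lemma spanningCoe_edgeSet' {V : Type*} {G : SimpleGraph V} (T : G.Subgraph) :
    T.spanningCoe.edgeSet = T.edgeSet := by
  ext s
  induction s using Sym2.ind with
  | _ a b => simp [SimpleGraph.mem_edgeSet, SimpleGraph.Subgraph.mem_edgeSet]

/-- Let `T` be a spanning forest of a finite simple graph `G`: a subgraph
with the same vertex set, acyclic, and such that any two vertices are connected in `T`
iff they are connected in `G`.  Then the `ZMod 2`-linear map `ker ∂_G → ((E(G) \ E(T)) → ZMod 2)`
restricting a cycle vector to the non-forest edges is a linear isomorphism (in particular,
for each non-forest edge there is a unique fundamental cycle, and these form a basis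
of the cycle space). -/
theorem stmt7 {V : Type*} [Fintype V] (G : SimpleGraph V) (T : G.Subgraph)
    (hverts : T.verts = Set.univ)
    (hacyclic : T.spanningCoe.IsAcyclic)
    (hreach : ∀ u v : V, T.spanningCoe.Reachable u v ↔ G.Reachable u v) :
    Function.Bijective (restrictCycles G T) := by
  constructor
  · -- injective
    rw [injective_iff_map_eq_zero]
    intro γ hγ
    have hnotT : ∀ (s : Sym2 V) (hsG : s ∈ G.edgeSet), s ∉ T.edgeSet →
        (γ : G.edgeSet → ZMod 2) ⟨s, hsG⟩ = 0 := by
      intro s hsG hsT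
      have := congrFun hγ ⟨s, ⟨hsG, hsT⟩⟩
      simpa [restrictCycles] using this
    have hkerEq : gbdry G (γ : G.edgeSet → ZMod 2) = 0 := γ.2
    have key : ∀ a b (hsG : s(a,b) ∈ G.edgeSet),
        (γ : G.edgeSet → ZMod 2) ⟨s(a,b), hsG⟩ = 0 := by
      intro a b hsG
      by_cases hsT : s(a,b) ∈ T.edgeSet
      · -- tree edge: cut/bridge argument
        have hadj : G.Adj a b := (SimpleGraph.mem_edgeSet G).mp hsG
        have hbr : T.spanningCoe.IsBridge s(a,b) :=
          (SimpleGraph.isAcyclic_iff_forall_edge_isBridge.mp hacyclic)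
            (by rw [spanningCoe_edgeSet' T]; exact hsT)
        have hnr := SimpleGraph.isBridge_iff.mp hbr
        set H := T.spanningCoe \ SimpleGraph.fromEdgeSet {s(a,b)} with hH
        set S : Set V := {v | H.Reachable a v} with hS
        have haS : a ∈ S := SimpleGraph.Reachable.refl a
        have hbS : b ∉ S := hnr
        have hedge : ∀ c d : V, T.Adj c d → s(c,d) ≠ s(a,b) → (c ∈ S ↔ d ∈ S) := by
          intro c d hcd hne
          have hHadj : H.Adj c d := by
            rw [hH, SimpleGraph.sdiff_adj]
            refine ⟨hcd, ?_⟩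
            rw [SimpleGraph.fromEdgeSet_adj]
            rintro ⟨hmem, -⟩
            exact hne hmem
          exact ⟨fun h => h.trans hHadj.reachable, fun h => h.trans hHadj.symm.reachable⟩
        have hcut := cut_eq G (γ : G.edgeSet → ZMod 2) S
        rw [hkerEq] at hcut
        simp only [Pi.zero_apply, ite_self, Finset.sum_const_zero] at hcut
        have hterm : ∀ (s' : Sym2 V), ∀ (hs' : s' ∈ G.edgeSet), s' ≠ s(a,b) →
            (γ : G.edgeSet → ZMod 2) ⟨s', hs'⟩ * crossZ S s' = 0 := by
          intro s'
          induction s' using Sym2.ind with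
          | _ c d =>
            intro hs' hne'
            by_cases hT' : s(c,d) ∈ T.edgeSet
            · have hcd : c ≠ d := ((SimpleGraph.mem_edgeSet G).mp hs').ne
              rw [cross_sum S hcd]
              have hiff := hedge c d ((SimpleGraph.Subgraph.mem_edgeSet).mp hT') hne'
              by_cases hc : c ∈ S
              · have hd : d ∈ S := hiff.mp hc
                rw [if_pos hc, if_pos hd, show (1:ZMod 2) + 1 = 0 by decide, mul_zero]
              · have hd : d ∉ S := fun h => hc (hiff.mpr h)
                rw [if_neg hc, if_neg hd, add_zero, mul_zero]
            · rw [hnotT s(c,d) hs' hT', zero_mul]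
        have hsum : (∑ e : G.edgeSet, (γ : G.edgeSet → ZMod 2) e * crossZ S (e : Sym2 V))
            = (γ : G.edgeSet → ZMod 2) ⟨s(a,b), hsG⟩ := by
          rw [Finset.sum_eq_single (⟨s(a,b), hsG⟩ : G.edgeSet)]
          · rw [show (((⟨s(a,b), hsG⟩ : G.edgeSet) : Sym2 V)) = s(a,b) from rfl,
              cross_sum S hadj.ne, if_pos haS, if_neg hbS, add_zero, mul_one]
          · intro e _ hne
            exact hterm e.1 e.2 (fun hh => hne (Subtype.ext hh))
          · intro h; exact absurd (Finset.mem_univ _) h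
        rw [hsum] at hcut
        exact hcut.symm
      · exact hnotT s(a,b) hsG hsT
    apply Subtype.ext
    funext g
    obtain ⟨s, hsG⟩ := g
    revert hsG
    induction s using Sym2.ind with
    | _ a b => intro hsG; exact key a b hsG
  · -- surjective
    have hrange : ∀ ε : ↥(G.edgeSet \ T.edgeSet),
        (fun j => if ε = j then (1:ZMod 2) else 0) ∈ LinearMap.range (restrictCycles G T) := by
      intro ε
      obtain ⟨s, hs⟩ := ε
      revert hs
      induction s using Sym2.ind with
      | _ u v =>
        intro hs
        have hadj : G.Adj u v := (SimpleGraph.mem_edgeSet G).mp hs.1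
        have hr : T.spanningCoe.Reachable u v := (hreach u v).mpr hadj.reachable
        obtain ⟨p'⟩ := hr
        have hsub : ∀ e ∈ p'.edges, e ∈ G.edgeSet := fun e he =>
          SimpleGraph.edgeSet_mono T.spanningCoe_le (p'.edges_subset_edgeSet he)
        set p := p'.transfer G hsub with hp
        have hpT : ∀ e ∈ p.edges, e ∈ T.edgeSet := by
          intro e he
          rw [hp, SimpleGraph.Walk.edges_transfer] at he
          have h1 := p'.edges_subset_edgeSet he
          rw [spanningCoe_edgeSet' T] at h1
          exact h1
        set γfun : G.edgeSet → ZMod 2 := fun g =>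
          (if (g : Sym2 V) = s(u,v) then 1 else 0)
          + ((p.edges.count (g : Sym2 V) : ℕ) : ZMod 2) with hγdef
        have hker : γfun ∈ LinearMap.ker (gbdry G) := by
          rw [LinearMap.mem_ker]
          have hsplit : γfun =
              (fun g : G.edgeSet => if (g : Sym2 V) = s(u,v) then (1:ZMod 2) else 0)
              + (fun g : G.edgeSet => ((p.edges.count (g : Sym2 V) : ℕ) : ZMod 2)) := rfl
          rw [hsplit, map_add, gbdry_single G hadj, gbdry_walk G p]
          funext w
          simp only [Pi.add_apply, Pi.zero_apply]
          exact CharTwo.add_self_eq_zero _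
        refine ⟨⟨γfun, hker⟩, ?_⟩
        funext ε'
        obtain ⟨s', hs'⟩ := ε'
        show γfun ⟨s', hs'.1⟩ = _
        have hc0 : p.edges.count s' = 0 :=
          List.count_eq_zero.mpr (fun hmem => hs'.2 (hpT s' hmem))
        rw [hγdef]
        simp only [hc0, Nat.cast_zero, add_zero]
        by_cases heq : s' = s(u,v)
        · rw [if_pos heq, if_pos (Subtype.ext heq.symm)]
        · rw [if_neg heq, if_neg (fun hh : (⟨s(u,v),hs⟩ : ↥(G.edgeSet \ T.edgeSet)) = ⟨s',hs'⟩ =>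
            heq (congrArg Subtype.val hh).symm)]
    intro f
    have hf : f ∈ LinearMap.range (restrictCycles G T) := by
      rw [pi_eq_sum_univ f]
      exact Submodule.sum_mem _ fun i _ => Submodule.smul_mem _ _ (hrange i)
    exact LinearMap.mem_range.mp hf
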